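/- Let f(x) = log(sinh x), g(y) = log(sinh y) for x, y > 0 and h(z) = −log(sin z) for z ∈ (0, π). Then at every point (x, y, z) with x > 0, y > 0, z ∈ (0, π) and sinh(x)·sinh(y) = sin(z) (equivalently f(x) + g(y) + h(z) = 0), the minimal separable surface equation holds: f''(x)(g'(y)² + h'(z)²) + g''(y)(f'(x)² + h'(z)²) + h''(z)(f'(x)² + g'(y)²) = 0. -/

import Mathlib

open Real Filter

lemma sinh_log_deriv {t : ℝ} (ht : 0 < t) :
    deriv (fun t => Real.log (Real.sinh t)) t = Real.cosh t / Real.sinh t :=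
  ((Real.hasDerivAt_sinh t).log (Real.sinh_pos_iff.2 ht).ne').deriv

lemma sinh_log_deriv2 {t : ℝ} (ht : 0 < t) :
    deriv (deriv (fun t => Real.log (Real.sinh t))) t
      = (Real.sinh t * Real.sinh t - Real.cosh t * Real.cosh t) / (Real.sinh t) ^ 2 := by
  have hev : deriv (fun t => Real.log (Real.sinh t)) =ᶠ[nhds t]
      fun t => Real.cosh t / Real.sinh t := by
    filter_upwards [isOpen_Ioi.mem_nhds ht] with s hs
    exact sinh_log_deriv hs
  rw [hev.deriv_eq]
  exact (((Real.hasDerivAt_cosh t).div (Real.hasDerivAt_sinh t)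
    (Real.sinh_pos_iff.2 ht).ne')).deriv

lemma sin_log_deriv {t : ℝ} (ht : t ∈ Set.Ioo 0 Real.pi) :
    deriv (fun t => -Real.log (Real.sin t)) t = -(Real.cos t / Real.sin t) :=
  (((Real.hasDerivAt_sin t).log (Real.sin_pos_of_pos_of_lt_pi ht.1 ht.2).ne')).neg.deriv

lemma sin_log_deriv2 {t : ℝ} (ht : t ∈ Set.Ioo 0 Real.pi) :
    deriv (deriv (fun t => -Real.log (Real.sin t))) t
      = -((-Real.sin t * Real.sin t - Real.cos t * Real.cos t) / (Real.sin t) ^ 2) := by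
  have hev : deriv (fun t => -Real.log (Real.sin t)) =ᶠ[nhds t]
      fun t => -(Real.cos t / Real.sin t) := by
    filter_upwards [(isOpen_Ioo).mem_nhds ht] with s hs
    exact sin_log_deriv hs
  rw [hev.deriv_eq]
  exact (((Real.hasDerivAt_cos t).div (Real.hasDerivAt_sin t)
    (Real.sin_pos_of_pos_of_lt_pi ht.1 ht.2).ne')).neg.deriv

/-- Scherk's surface `sin(z) = sinh(x)sinh(y)`: with `f(x) = log(sinh x)`,
`g(y) = log(sinh y)`, `h(z) = −log(sin z)`, the minimal separable surface equation
`f''(g'² + h'²) + g''(f'² + h'²) + h''(f'² + g'²) = 0` holds at points of the surface. -/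
theorem stmt_17 :
    ∀ x y z : ℝ, 0 < x → 0 < y → z ∈ Set.Ioo 0 Real.pi →
      Real.sinh x * Real.sinh y = Real.sin z →
      deriv (deriv (fun t => Real.log (Real.sinh t))) x
          * ((deriv (fun t => Real.log (Real.sinh t)) y) ^ 2
            + (deriv (fun t => -Real.log (Real.sin t)) z) ^ 2)
        + deriv (deriv (fun t => Real.log (Real.sinh t))) y
          * ((deriv (fun t => Real.log (Real.sinh t)) x) ^ 2
            + (deriv (fun t => -Real.log (Real.sin t)) z) ^ 2)
        + deriv (deriv (fun t => -Real.log (Real.sin t))) z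
          * ((deriv (fun t => Real.log (Real.sinh t)) x) ^ 2
            + (deriv (fun t => Real.log (Real.sinh t)) y) ^ 2) = 0 := by
  intro x y z hx hy hz hsurf
  rw [sinh_log_deriv hx, sinh_log_deriv hy, sinh_log_deriv2 hx, sinh_log_deriv2 hy,
    sin_log_deriv hz, sin_log_deriv2 hz]
  have hsx : Real.sinh x ≠ 0 := (Real.sinh_pos_iff.2 hx).ne'
  have hsy : Real.sinh y ≠ 0 := (Real.sinh_pos_iff.2 hy).ne'
  have hsz : Real.sin z ≠ 0 := (Real.sin_pos_of_pos_of_lt_pi hz.1 hz.2).ne'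
  have hcx : Real.cosh x ^ 2 = 1 + Real.sinh x ^ 2 := by
    have := Real.cosh_sq_sub_sinh_sq x; nlinarith [this]
  have hcy : Real.cosh y ^ 2 = 1 + Real.sinh y ^ 2 := by
    have := Real.cosh_sq_sub_sinh_sq y; nlinarith [this]
  have hcz : Real.cos z ^ 2 = 1 - Real.sin z ^ 2 := by
    have := Real.sin_sq_add_cos_sq z; nlinarith [this]
  have h1 : Real.cosh x * Real.cosh x = 1 + Real.sinh x * Real.sinh x := by nlinarith [hcx]
  have h2 : Real.cosh y * Real.cosh y = 1 + Real.sinh y * Real.sinh y := by nlinarith [hcy]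
  have h3 : Real.cos z * Real.cos z = 1 - Real.sin z * Real.sin z := by nlinarith [hcz]
  field_simp
  rw [hcx, hcy, hcz, ← hsurf]
  ring
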